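/- Weak duality for the ordered-search adversary program: let n ≥ 1, let γ_1,…,γ_n be nonnegative reals such that the spectral norm of the n×n symmetric Toeplitz matrix Toeplitz(γ_n,…,γ_1) is at most 1, and let P be an n×n positive semidefinite real matrix such that ∑_{j=1}^{n−i} P[j, j+i] ≥ 1 for every i = 0,…,n−1. Then γ_n + 2∑_{i=1}^{n−1} γ_i ≤ Tr(P). -/

import Mathlib

/-- `toeplitz n γ` is the `n×n` symmetric Toeplitz matrix `Toeplitz(γ_n, …, γ_1)` whose
`(i,j)` entry (for `1 ≤ i, j ≤ n`) is `γ_{n − |i−j|}`. -/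
def toeplitz (n : ℕ) (γ : ℕ → ℝ) : Matrix (Fin n) (Fin n) ℝ :=
  Matrix.of fun i j => γ (n - (max (i : ℕ) (j : ℕ) - min (i : ℕ) (j : ℕ)))

/-- The spectral norm (largest singular value) of a real matrix, as the operator norm
of its action on Euclidean space. -/
noncomputable def sNorm {n : ℕ} (M : Matrix (Fin n) (Fin n) ℝ) : ℝ :=
  ‖Matrix.toEuclideanCLM (𝕜 := ℝ) M‖

/-- The `i`-th superdiagonal sum `∑_{j=1}^{n−i} P[j, j+i]` of an `n×n` matrix `P`. -/
def sdiagSum {n : ℕ} (P : Matrix (Fin n) (Fin n) ℝ) (i : ℕ) : ℝ :=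
  ∑ j : Fin n, ∑ k : Fin n, if (k : ℕ) = (j : ℕ) + i then P j k else 0

open Matrix RealInnerProductSpace

lemma sum_swap3 {α : Type*} [AddCommMonoid α] {m : ℕ} (s : Finset ℕ) (F : Fin m → Fin m → ℕ → α) :
    ∑ i : Fin m, ∑ j : Fin m, ∑ d ∈ s, F i j d = ∑ d ∈ s, ∑ i : Fin m, ∑ j : Fin m, F i j d := by
  have h : ∀ i : Fin m, ∑ j : Fin m, ∑ d ∈ s, F i j d = ∑ d ∈ s, ∑ j : Fin m, F i j d :=
    fun i => Finset.sum_comm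
  simp_rw [h]
  exact Finset.sum_comm

lemma quad_le_sNorm {n : ℕ} (M : Matrix (Fin n) (Fin n) ℝ) (x : Fin n → ℝ) :
    x ⬝ᵥ (M *ᵥ x) ≤ sNorm M * (x ⬝ᵥ x) := by
  set y : EuclideanSpace ℝ (Fin n) := (WithLp.equiv 2 (Fin n → ℝ)).symm x with hy
  set T := Matrix.toEuclideanCLM (𝕜 := ℝ) M with hT
  have h1 : x ⬝ᵥ (M *ᵥ x) = (inner ℝ y (T y) : ℝ) := by
    rw [hy, hT]
    simp [PiLp.inner_apply, dotProduct, mul_comm]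
  have h2 : x ⬝ᵥ x = ‖y‖ * ‖y‖ := by
    rw [← real_inner_self_eq_norm_mul_norm]
    simp only [hy, PiLp.inner_apply, dotProduct, WithLp.equiv_symm_apply, RCLike.inner_apply, conj_trivial, mul_comm]
  rw [h1, h2]
  calc (inner ℝ y (T y) : ℝ)
      ≤ ‖y‖ * ‖T y‖ := real_inner_le_norm _ _
    _ ≤ ‖y‖ * (sNorm M * ‖y‖) := by
        exact mul_le_mul_of_nonneg_left (T.le_opNorm y) (norm_nonneg _)
    _ = sNorm M * (‖y‖ * ‖y‖) := by ring

lemma trace_nonneg_of_posSemidef {n : ℕ} {M : Matrix (Fin n) (Fin n) ℝ}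
    (hM : M.PosSemidef) : 0 ≤ M.trace := by
  rw [Matrix.trace]
  apply Finset.sum_nonneg
  intro i _
  have := hM.dotProduct_mulVec_nonneg (Pi.single i 1)
  simpa [dotProduct, Matrix.mulVec, Pi.single_apply] using this

lemma trace_mul_nonneg_of_posSemidef {n : ℕ} {A B : Matrix (Fin n) (Fin n) ℝ}
    (hA : A.PosSemidef) (hB : B.PosSemidef) : 0 ≤ (A * B).trace := by
  obtain ⟨C, rfl⟩ : ∃ C : Matrix (Fin n) (Fin n) ℝ, B = Cᴴ * C := by
    open scoped Matrix.Norms.L2Operator MatrixOrder in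
    exact CStarAlgebra.nonneg_iff_eq_star_mul_self.mp hB.nonneg
  have h : (A * (Cᴴ * C)).trace = (C * A * Cᴴ).trace := by
    rw [← Matrix.mul_assoc, Matrix.trace_mul_comm, ← Matrix.mul_assoc]
  rw [h]
  exact trace_nonneg_of_posSemidef (hA.mul_mul_conjTranspose_same C)

/-- Weak duality for the ordered-search adversary program: if `γ_1, …, γ_n` are nonnegative
reals such that `‖Toeplitz(γ_n, …, γ_1)‖ ≤ 1`, and `P` is an `n×n` positive semidefinite real
matrix each of whose superdiagonal sums `∑_{j=1}^{n−i} P[j, j+i]` (`0 ≤ i ≤ n−1`) is at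
least `1`, then `γ_n + 2 ∑_{i=1}^{n−1} γ_i ≤ Tr(P)`. -/
theorem weak_duality (n : ℕ) (hn : 1 ≤ n) (γ : ℕ → ℝ)
    (hpos : ∀ i, 1 ≤ i → i ≤ n → 0 ≤ γ i)
    (hnorm : sNorm (toeplitz n γ) ≤ 1)
    (P : Matrix (Fin n) (Fin n) ℝ) (hP : P.PosSemidef)
    (hsd : ∀ i < n, 1 ≤ sdiagSum P i) :
    γ n + 2 * ∑ i ∈ Finset.Icc 1 (n - 1), γ i ≤ P.trace := by
  set Γ := toeplitz n γ with hΓdef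
  -- symmetry of P
  have hPsymm : ∀ i j : Fin n, P j i = P i j := by
    intro i j
    have := congrFun (congrFun hP.1 i) j
    simpa [Matrix.conjTranspose_apply] using this
  -- symmetry of Γ
  have hΓherm : Γ.IsHermitian := by
    ext i j
    simp only [Matrix.conjTranspose_apply, hΓdef, toeplitz, Matrix.of_apply, star_trivial]
    congr 1
    omega
  -- 1 - Γ is PSD
  have honesub : (1 - Γ).PosSemidef := by
    refine Matrix.PosSemidef.of_dotProduct_mulVec_nonneg ?_ ?_
    · unfold Matrix.IsHermitian
      rw [Matrix.conjTranspose_sub, hΓherm]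
      simp
    · intro x
      have hxx : (0:ℝ) ≤ x ⬝ᵥ x := by
        apply Finset.sum_nonneg
        intro i _
        exact mul_self_nonneg _
      have h1 : x ⬝ᵥ (Γ *ᵥ x) ≤ x ⬝ᵥ x := by
        calc x ⬝ᵥ (Γ *ᵥ x) ≤ sNorm Γ * (x ⬝ᵥ x) := quad_le_sNorm Γ x
          _ ≤ 1 * (x ⬝ᵥ x) := mul_le_mul_of_nonneg_right hnorm hxx
          _ = x ⬝ᵥ x := one_mul _
      have hstar : star x = x := by funext i; simp
      rw [hstar, Matrix.sub_mulVec, dotProduct_sub, Matrix.one_mulVec]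
      linarith
  -- trace (Γ * P) ≤ trace P
  have htr : (Γ * P).trace ≤ P.trace := by
    have h0 : 0 ≤ ((1 - Γ) * P).trace := trace_mul_nonneg_of_posSemidef honesub hP
    rw [Matrix.sub_mul, Matrix.one_mul, Matrix.trace_sub] at h0
    linarith
  -- trace (Γ * P) as a double sum
  have htrsum : (Γ * P).trace = ∑ i : Fin n, ∑ j : Fin n, Γ i j * P i j := by
    rw [Matrix.trace]
    apply Finset.sum_congr rfl
    intro i _
    rw [Matrix.diag_apply, Matrix.mul_apply]
    exact Finset.sum_congr rfl fun j _ => by rw [hPsymm i j]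
  -- group by distance d
  have hgroup : (∑ i : Fin n, ∑ j : Fin n, Γ i j * P i j)
      = ∑ d ∈ Finset.range n, γ (n - d) *
          (∑ i : Fin n, ∑ j : Fin n,
            if max (i : ℕ) (j : ℕ) - min (i : ℕ) (j : ℕ) = d then P i j else 0) := by
    have h1 : ∀ i j : Fin n, Γ i j * P i j
        = ∑ d ∈ Finset.range n,
            if max (i : ℕ) (j : ℕ) - min (i : ℕ) (j : ℕ) = d then γ (n - d) * P i j else 0 := by
      intro i j
      rw [Finset.sum_ite_eq]
      rw [if_pos (Finset.mem_range.mpr (by have := i.isLt; have := j.isLt; omega))]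
      simp [hΓdef, toeplitz]
    simp_rw [h1, Finset.mul_sum, mul_ite, mul_zero]
    exact sum_swap3 _ _
  -- T 0 = sdiagSum P 0
  have hT0 : (∑ i : Fin n, ∑ j : Fin n,
      if max (i : ℕ) (j : ℕ) - min (i : ℕ) (j : ℕ) = 0 then P i j else 0) = sdiagSum P 0 := by
    unfold sdiagSum
    apply Finset.sum_congr rfl; intro i _
    apply Finset.sum_congr rfl; intro j _
    exact if_congr (by omega) rfl rfl
  -- T d = 2 * sdiagSum P d for d ≥ 1
  have hTd : ∀ d, 1 ≤ d → (∑ i : Fin n, ∑ j : Fin n,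
      if max (i : ℕ) (j : ℕ) - min (i : ℕ) (j : ℕ) = d then P i j else 0)
      = 2 * sdiagSum P d := by
    intro d hd
    have hsplit : ∀ i j : Fin n,
        (if max (i : ℕ) (j : ℕ) - min (i : ℕ) (j : ℕ) = d then P i j else 0)
        = (if (j : ℕ) = (i : ℕ) + d then P i j else 0)
          + (if (i : ℕ) = (j : ℕ) + d then P i j else 0) := by
      intro i j
      by_cases h1 : (j : ℕ) = (i : ℕ) + d
      · rw [if_pos (by omega), if_pos h1, if_neg (by omega), add_zero]
      · by_cases h2 : (i : ℕ) = (j : ℕ) + d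
        · rw [if_pos (by omega), if_neg h1, if_pos h2, zero_add]
        · rw [if_neg (by omega), if_neg h1, if_neg h2, add_zero]
    simp_rw [hsplit, Finset.sum_add_distrib]
    have hfirst : (∑ i : Fin n, ∑ j : Fin n, if (j : ℕ) = (i : ℕ) + d then P i j else 0)
        = sdiagSum P d := rfl
    have hsecond : (∑ i : Fin n, ∑ j : Fin n, if (i : ℕ) = (j : ℕ) + d then P i j else 0)
        = sdiagSum P d := by
      rw [Finset.sum_comm]
      unfold sdiagSum
      apply Finset.sum_congr rfl; intro j _
      apply Finset.sum_congr rfl; intro i _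
      by_cases h : (i : ℕ) = (j : ℕ) + d
      · rw [if_pos h, if_pos h, hPsymm j i]
      · rw [if_neg h, if_neg h]
    rw [hfirst, hsecond]; ring
  -- put it together
  have hsum : (Γ * P).trace = γ n * sdiagSum P 0
      + ∑ d ∈ Finset.Ico 1 n, γ (n - d) * (2 * sdiagSum P d) := by
    rw [htrsum, hgroup, Finset.range_eq_Ico, Finset.sum_eq_sum_Ico_succ_bot hn]
    rw [hT0]
    simp only [Nat.sub_zero]
    congr 1
    apply Finset.sum_congr rfl
    intro d hd
    rw [Finset.mem_Ico] at hd
    rw [hTd d hd.1]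
  -- lower bound the sum
  have hlow : γ n + 2 * ∑ i ∈ Finset.Icc 1 (n - 1), γ i ≤ (Γ * P).trace := by
    rw [hsum]
    have hre : ∑ i ∈ Finset.Icc 1 (n - 1), γ i = ∑ d ∈ Finset.Ico 1 n, γ (n - d) := by
      apply Finset.sum_nbij' (i := fun i => n - i) (j := fun d => n - d)
      · intro a ha; rw [Finset.mem_Icc] at ha; rw [Finset.mem_Ico]; omega
      · intro a ha; rw [Finset.mem_Ico] at ha; rw [Finset.mem_Icc]; omega
      · intro a ha; rw [Finset.mem_Icc] at ha; omega
      · intro a ha; rw [Finset.mem_Ico] at ha; omega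
      · intro a ha; rw [Finset.mem_Icc] at ha; congr 1; omega
    rw [hre, Finset.mul_sum]
    apply add_le_add
    · have h0 := hsd 0 hn
      have hγn := hpos n hn le_rfl
      nlinarith
    · apply Finset.sum_le_sum
      intro d hd
      rw [Finset.mem_Ico] at hd
      have hγ := hpos (n - d) (by omega) (by omega)
      have hS := hsd d hd.2
      nlinarith
  linarith
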